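/- As F_2-vector spaces, the image of N_1(2j+1) under the isomorphism τ decomposes as τ(N_1(2j+1)) = (N_2(j-1) ⊗ (A(2) // A(1))_*) ⊕ (M_2(j) ⊗ N_1(1)), where N_1(1) = F_2{1, ξ̄_1^4, ξ̄_2^2, ξ̄_3}. -/

import Mathlib

open TensorProduct

/-- The mod 2 dual Steenrod algebra on the conjugate generators:
`MvPolynomial.X k` represents `ξ̄_{k+1}`. -/
abbrev DualSteenrod : Type := MvPolynomial ℕ (ZMod 2)

/-- Brown-Gitler weight: `ξ̄_{k+1}` has weight `2^k`. -/
def bgWeight (d : ℕ →₀ ℕ) : ℕ := d.sum fun k e => e * 2 ^ k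

/-- Exterior residue `(4ε₁, 2ε₂, ε₃, 0, …)` of an exponent. -/
noncomputable def dLow (d : ℕ →₀ ℕ) : ℕ →₀ ℕ :=
  Finsupp.single 0 (d 0 % 8) + Finsupp.single 1 (d 1 % 4) + Finsupp.single 2 (d 2 % 2)

/-- 2-divisible part `(8i₁, 4i₂, 2i₃, i₄, …)` of an exponent. -/
noncomputable def dHigh (d : ℕ →₀ ℕ) : ℕ →₀ ℕ := d - dLow d

/-- The monomial-splitting map `τ : (A ⫽ A(1))_* → (A ⫽ A(2))_* ⊗ (A(2) ⫽ A(1))_*`. -/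
noncomputable def tau : DualSteenrod →ₗ[ZMod 2] DualSteenrod ⊗[ZMod 2] DualSteenrod :=
  (MvPolynomial.basisMonomials ℕ (ZMod 2)).constr (ZMod 2) fun d =>
    (MvPolynomial.monomial (dHigh d) 1) ⊗ₜ[ZMod 2] (MvPolynomial.monomial (dLow d) 1)

def isAA1 (d : ℕ →₀ ℕ) : Prop := 4 ∣ d 0 ∧ 2 ∣ d 1

def isAA2 (d : ℕ →₀ ℕ) : Prop := 8 ∣ d 0 ∧ 4 ∣ d 1 ∧ 2 ∣ d 2

def isExtMono (d : ℕ →₀ ℕ) : Prop :=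
  (d 0 = 0 ∨ d 0 = 4) ∧ (d 1 = 0 ∨ d 1 = 2) ∧ d 2 ≤ 1 ∧ ∀ k, 3 ≤ k → d k = 0

/-- The bo-Brown-Gitler comodule `N₁(m)`: span of monomials of `(A ⫽ A(1))_*` of
Brown-Gitler filtration at most `4m`. -/
noncomputable def N1 (m : ℕ) : Submodule (ZMod 2) DualSteenrod :=
  Submodule.span (ZMod 2)
    {x | ∃ d, isAA1 d ∧ bgWeight d ≤ 4 * m ∧ x = MvPolynomial.monomial d 1}

/-- Exterior monomials in `N₁(1) = F₂{1, ξ̄_1^4, ξ̄_2^2, ξ̄_3}`. -/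
def isN11Mono (d : ℕ →₀ ℕ) : Prop := isExtMono d ∧ bgWeight d ≤ 4

/-- `N₂(j-1) ⊗ (A(2) ⫽ A(1))_*`: basis tensors with left weight at most `8(j-1)`. -/
noncomputable def S1 (j : ℕ) : Submodule (ZMod 2) (DualSteenrod ⊗[ZMod 2] DualSteenrod) :=
  Submodule.span (ZMod 2)
    {t | ∃ a b : ℕ →₀ ℕ, isAA2 a ∧ bgWeight a ≤ 8 * (j - 1) ∧ isExtMono b ∧
      t = (MvPolynomial.monomial a 1) ⊗ₜ[ZMod 2] (MvPolynomial.monomial b 1)}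

/-- `M₂(j) ⊗ N₁(1)`: basis tensors with left weight exactly `8j` and right factor
in `N₁(1)`. -/
noncomputable def S2 (j : ℕ) : Submodule (ZMod 2) (DualSteenrod ⊗[ZMod 2] DualSteenrod) :=
  Submodule.span (ZMod 2)
    {t | ∃ a b : ℕ →₀ ℕ, isAA2 a ∧ bgWeight a = 8 * j ∧ isN11Mono b ∧
      t = (MvPolynomial.monomial a 1) ⊗ₜ[ZMod 2] (MvPolynomial.monomial b 1)}


lemma bgWeight_add (a b : ℕ →₀ ℕ) : bgWeight (a + b) = bgWeight a + bgWeight b := by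
  unfold bgWeight
  apply Finsupp.sum_add_index' (h := fun k e => e * 2 ^ k) <;> intros <;> ring

lemma bgWeight_single (k e : ℕ) : bgWeight (Finsupp.single k e) = e * 2 ^ k := by
  unfold bgWeight
  rw [Finsupp.sum_single_index]
  ring

lemma dLow_apply (d : ℕ →₀ ℕ) (k : ℕ) :
    dLow d k = if k = 0 then d 0 % 8 else if k = 1 then d 1 % 4 else
      if k = 2 then d 2 % 2 else 0 := by
  unfold dLow
  rcases k with _|_|_|k <;> simp [Finsupp.single_apply]

lemma dLow_le (d : ℕ →₀ ℕ) : dLow d ≤ d := by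
  rw [Finsupp.le_def]
  intro k
  rw [dLow_apply]
  rcases k with _|_|_|k <;> simp <;> omega

lemma dHigh_apply (d : ℕ →₀ ℕ) (k : ℕ) : dHigh d k = d k - dLow d k := by
  unfold dHigh
  rw [Finsupp.tsub_apply]

lemma dHigh_add_dLow (d : ℕ →₀ ℕ) : dHigh d + dLow d = d :=
  tsub_add_cancel_of_le (dLow_le d)

lemma bgWeight_eq (d : ℕ →₀ ℕ) :
    bgWeight d = bgWeight (dHigh d) + bgWeight (dLow d) := by
  conv_lhs => rw [← dHigh_add_dLow d]
  exact bgWeight_add _ _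

lemma bgWeight_dLow (d : ℕ →₀ ℕ) :
    bgWeight (dLow d) = d 0 % 8 + d 1 % 4 * 2 + d 2 % 2 * 4 := by
  unfold dLow
  rw [bgWeight_add, bgWeight_add, bgWeight_single, bgWeight_single, bgWeight_single]
  ring

lemma isAA2_dHigh (d : ℕ →₀ ℕ) : isAA2 (dHigh d) := by
  refine ⟨?_, ?_, ?_⟩ <;> rw [dHigh_apply, dLow_apply] <;> simp <;> omega

lemma isExtMono_dLow {d : ℕ →₀ ℕ} (h : isAA1 d) : isExtMono (dLow d) := by
  obtain ⟨h0, h1⟩ := h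
  refine ⟨?_, ?_, ?_, ?_⟩
  · rw [dLow_apply]; simp; omega
  · rw [dLow_apply]; simp; omega
  · rw [dLow_apply]; simp; omega
  · intro k hk
    rw [dLow_apply, if_neg (by omega), if_neg (by omega), if_neg (by omega)]

lemma dvd8_bgWeight {a : ℕ →₀ ℕ} (h : isAA2 a) : 8 ∣ bgWeight a := by
  obtain ⟨h0, h1, h2⟩ := h
  unfold bgWeight Finsupp.sum
  apply Finset.dvd_sum
  intro k _
  rcases k with _|_|_|k
  · simpa using h0
  · obtain ⟨c, hc⟩ := h1; exact ⟨c, by simp [hc]; ring⟩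
  · obtain ⟨c, hc⟩ := h2; exact ⟨c, by simp [hc]; ring⟩
  · refine Dvd.dvd.mul_left ⟨2 ^ k, ?_⟩ _
    rw [pow_add]; ring

lemma ext_decomp {b : ℕ →₀ ℕ} (hb : ∀ k, 3 ≤ k → b k = 0) :
    b = Finsupp.single 0 (b 0) + Finsupp.single 1 (b 1) + Finsupp.single 2 (b 2) := by
  ext k
  rcases k with _|_|_|k <;> simp [Finsupp.single_apply]
  exact hb _ (by omega)

lemma bgWeight_ext {b : ℕ →₀ ℕ} (hb : ∀ k, 3 ≤ k → b k = 0) :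
    bgWeight b = b 0 + b 1 * 2 + b 2 * 4 := by
  conv_lhs => rw [ext_decomp hb]
  rw [bgWeight_add, bgWeight_add, bgWeight_single, bgWeight_single, bgWeight_single]
  ring

lemma dLow_add_eq {a b : ℕ →₀ ℕ} (ha : isAA2 a) (hb : isExtMono b) : dLow (a + b) = b := by
  obtain ⟨ha0, ha1, ha2⟩ := ha
  obtain ⟨hb0, hb1, hb2, hb3⟩ := hb
  ext k
  rw [dLow_apply]
  rcases k with _|_|_|k <;> simp [Finsupp.add_apply] <;> try omega
  exact (hb3 _ (by omega)).symm

lemma dHigh_add_eq {a b : ℕ →₀ ℕ} (ha : isAA2 a) (hb : isExtMono b) : dHigh (a + b) = a := by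
  unfold dHigh
  rw [dLow_add_eq ha hb, add_tsub_cancel_right]

lemma tau_monomial (d : ℕ →₀ ℕ) :
    tau (MvPolynomial.monomial d 1) =
      (MvPolynomial.monomial (dHigh d) 1) ⊗ₜ[ZMod 2] (MvPolynomial.monomial (dLow d) 1) := by
  have h : (MvPolynomial.monomial d (1 : ZMod 2)) = MvPolynomial.basisMonomials ℕ (ZMod 2) d := by
    rw [MvPolynomial.coe_basisMonomials]
  rw [h]
  exact Module.Basis.constr_basis _ _ _ _


lemma bgWeight_ext_le {b : ℕ →₀ ℕ} (hb : isExtMono b) : bgWeight b ≤ 12 := by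
  obtain ⟨h0, h1, h2, h3⟩ := hb
  rw [bgWeight_ext h3]
  omega

lemma isAA1_add {a b : ℕ →₀ ℕ} (ha : isAA2 a) (hb : isExtMono b) : isAA1 (a + b) := by
  obtain ⟨ha0, ha1, ha2⟩ := ha
  obtain ⟨hb0, hb1, hb2, hb3⟩ := hb
  constructor <;> simp [Finsupp.add_apply] <;> omega

noncomputable def Btp : Module.Basis ((ℕ →₀ ℕ) × (ℕ →₀ ℕ)) (ZMod 2)
    (DualSteenrod ⊗[ZMod 2] DualSteenrod) :=
  (MvPolynomial.basisMonomials ℕ (ZMod 2)).tensorProduct (MvPolynomial.basisMonomials ℕ (ZMod 2))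

lemma Btp_apply (a b : ℕ →₀ ℕ) :
    Btp (a, b) = (MvPolynomial.monomial a 1) ⊗ₜ[ZMod 2] (MvPolynomial.monomial b 1) := by
  rw [Btp, Module.Basis.tensorProduct_apply]
  rfl

/-- as `F₂`-vector spaces,
`τ(N₁(2j+1)) = (N₂(j-1) ⊗ (A(2) ⫽ A(1))_*) ⊕ (M₂(j) ⊗ N₁(1))`. -/
theorem stmt15 (j : ℕ) (hj : 1 ≤ j) :
    Submodule.map tau (N1 (2 * j + 1)) = S1 j ⊔ S2 j ∧ Disjoint (S1 j) (S2 j) := by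
  constructor
  · rw [N1, Submodule.map_span, S1, S2, ← Submodule.span_union]
    congr 1
    ext t
    constructor
    · rintro ⟨x, ⟨d, hd1, hd2, rfl⟩, rfl⟩
      rw [tau_monomial]
      have hw := bgWeight_eq d
      obtain ⟨c, hc⟩ := dvd8_bgWeight (isAA2_dHigh d)
      by_cases hcase : bgWeight (dHigh d) ≤ 8 * (j - 1)
      · exact Or.inl ⟨dHigh d, dLow d, isAA2_dHigh d, hcase, isExtMono_dLow hd1, rfl⟩
      · refine Or.inr ⟨dHigh d, dLow d, isAA2_dHigh d, ?_, ⟨isExtMono_dLow hd1, ?_⟩, rfl⟩ <;>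
          omega
    · rintro (⟨a, b, ha, hwa, hb, rfl⟩ | ⟨a, b, ha, hwa, ⟨hb, hwb⟩, rfl⟩)
      · refine ⟨MvPolynomial.monomial (a + b) 1, ⟨a + b, isAA1_add ha hb, ?_, rfl⟩, ?_⟩
        · rw [bgWeight_add]
          have := bgWeight_ext_le hb
          omega
        · rw [tau_monomial, dHigh_add_eq ha hb, dLow_add_eq ha hb]
      · refine ⟨MvPolynomial.monomial (a + b) 1, ⟨a + b, isAA1_add ha hb, ?_, rfl⟩, ?_⟩
        · rw [bgWeight_add]; omega
        · rw [tau_monomial, dHigh_add_eq ha hb, dLow_add_eq ha hb]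
  · have h1 : S1 j = Submodule.span (ZMod 2)
        (⇑Btp '' {p | isAA2 p.1 ∧ bgWeight p.1 ≤ 8 * (j - 1) ∧ isExtMono p.2}) := by
      rw [S1]
      congr 1
      ext t
      constructor
      · rintro ⟨a, b, h₁, h₂, h₃, rfl⟩
        exact ⟨(a, b), ⟨h₁, h₂, h₃⟩, (Btp_apply a b)⟩
      · rintro ⟨⟨a, b⟩, ⟨h₁, h₂, h₃⟩, rfl⟩
        exact ⟨a, b, h₁, h₂, h₃, (Btp_apply a b)⟩
    have h2 : S2 j = Submodule.span (ZMod 2)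
        (⇑Btp '' {p | isAA2 p.1 ∧ bgWeight p.1 = 8 * j ∧ isN11Mono p.2}) := by
      rw [S2]
      congr 1
      ext t
      constructor
      · rintro ⟨a, b, h₁, h₂, h₃, rfl⟩
        exact ⟨(a, b), ⟨h₁, h₂, h₃⟩, (Btp_apply a b)⟩
      · rintro ⟨⟨a, b⟩, ⟨h₁, h₂, h₃⟩, rfl⟩
        exact ⟨a, b, h₁, h₂, h₃, (Btp_apply a b)⟩
    rw [h1, h2]
    apply Btp.linearIndependent.disjoint_span_image
    rw [Set.disjoint_left]
    rintro ⟨a, b⟩ ⟨_, h₂, _⟩ ⟨_, h₂', _⟩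
    omega
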